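/- Fix constants κ>0 and β∈(0,1). The equation h_κ(α)=0 has exactly one solution α* in the open interval (0,β). Moreover, the rescaled function α ↦ α^{1−κ}·h_κ(α) is strictly decreasing on (0,β], it is positive for all α sufficiently close to 0, and it is negative at α=β. -/

import Mathlib

open Set Filter

open Topology
/-- For constants `κ > 0` and `β ∈ (0,1)`, with
`h κ α = β/α − ∫_α^1 t^(κ−2) dt − 1`, the equation `h α = 0` has exactly one
solution `α*` in `(0,β)`; moreover `α ↦ α^(1−κ) · h α` is strictly decreasing
on `(0,β]`, positive for all `α` sufficiently close to `0`, and negative at `β`. -/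
theorem stmt0 (κ β : ℝ) (hκ : 0 < κ) (hβ : β ∈ Set.Ioo (0:ℝ) 1)
    (h : ℝ → ℝ)
    (hdef : ∀ α, h α = β / α - (∫ t in α..(1:ℝ), t ^ (κ - 2)) - 1) :
    (∃! α, α ∈ Set.Ioo (0:ℝ) β ∧ h α = 0) ∧
    StrictAntiOn (fun α => α ^ ((1:ℝ) - κ) * h α) (Set.Ioc (0:ℝ) β) ∧
    (∃ ε > (0:ℝ), ∀ α ∈ Set.Ioo (0:ℝ) ε, 0 < α ^ ((1:ℝ) - κ) * h α) ∧
    β ^ ((1:ℝ) - κ) * h β < 0 := by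
  obtain ⟨hβ0, hβ1⟩ := hβ
  set F : ℝ → ℝ := fun x => ∫ t in x..(1:ℝ), t ^ (κ - 2) with hF
  set g : ℝ → ℝ := fun α => α ^ ((1:ℝ) - κ) * h α with hg
  -- integrability
  have hint : ∀ a : ℝ, 0 < a →
      IntervalIntegrable (fun t : ℝ => t ^ (κ - 2)) MeasureTheory.volume a 1 := by
    intro a ha
    apply intervalIntegral.intervalIntegrable_rpow
    right
    intro h0
    rcases Set.mem_uIcc.mp h0 with ⟨h1, _⟩ | ⟨_, h2⟩ <;> linarith
  -- key identity
  have hkey : ∀ a : ℝ, 0 < a → (κ - 1) * F a = 1 - a ^ (κ - 1) := by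
    intro a ha
    rcases eq_or_ne κ 1 with hk1 | hk1
    · simp [hk1, Real.rpow_zero]
    · have hne : κ - 2 ≠ -1 := by intro hc; apply hk1; linarith
      have h0 : (0:ℝ) ∉ Set.uIcc a 1 := by
        intro h0
        rcases Set.mem_uIcc.mp h0 with ⟨h1, _⟩ | ⟨_, h2⟩ <;> linarith
      have hI := integral_rpow (a := a) (b := 1) (r := κ - 2) (Or.inr ⟨hne, h0⟩)
      have hFa : F a = (1 - a ^ (κ - 1)) / (κ - 1) := by
        rw [hF]
        simp only [hI]
        rw [show κ - 2 + 1 = κ - 1 by ring, Real.one_rpow]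
      rw [hFa, mul_comm, div_mul_cancel₀ _ (sub_ne_zero.mpr hk1)]
  -- auxiliary: F a = (1 - a^(κ-1))/(κ-1) when κ ≠ 1
  have hFa_eq : κ ≠ 1 → ∀ a : ℝ, 0 < a → F a = (1 - a ^ (κ - 1)) / (κ - 1) := by
    intro hk1 a ha
    have hκ1 : κ - 1 ≠ 0 := sub_ne_zero.mpr hk1
    rw [eq_div_iff hκ1]
    linarith [hkey a ha]
  -- derivative of g
  have hderiv : ∀ a : ℝ, 0 < a → HasDerivAt g (κ * a ^ (-κ - 1) * (a - β)) a := by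
    intro a ha
    have hFa : HasDerivAt F (-(a ^ (κ - 2))) a := by
      apply intervalIntegral.integral_hasDerivAt_left (hint a ha)
      · refine ContinuousAt.stronglyMeasurableAtFilter isOpen_Ioi ?_ a ha
        intro x hx
        exact Real.continuousAt_rpow_const x (κ - 2) (Or.inl (ne_of_gt hx))
      · exact Real.continuousAt_rpow_const a (κ - 2) (Or.inl ha.ne')
    have hpow : HasDerivAt (fun x : ℝ => x ^ ((1:ℝ) - κ))
        ((1 - κ) * a ^ ((1:ℝ) - κ - 1)) a :=
      Real.hasDerivAt_rpow_const (Or.inl ha.ne')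
    have hv : HasDerivAt (fun x : ℝ => β * x⁻¹ - F x - 1)
        (β * -(a ^ 2)⁻¹ - -(a ^ (κ - 2))) a :=
      (((hasDerivAt_inv ha.ne').const_mul β).sub hFa).sub_const 1
    have hmul := hpow.mul hv
    have hgeq : g = fun x : ℝ => x ^ ((1:ℝ) - κ) * (β * x⁻¹ - F x - 1) := by
      funext x
      rw [hg]
      simp only [hdef x, div_eq_mul_inv]
      rfl
    rw [hgeq]
    refine hmul.congr_deriv ?_
    symm
    have hane : a ≠ 0 := ha.ne'
    set s := a ^ (-κ - 1) with hs
    set t := a ^ (κ - 1) with ht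
    have e1 : a ^ ((1:ℝ) - κ) = a * a * s := by
      rw [hs, show (1:ℝ) - κ = 2 + (-κ - 1) by ring, Real.rpow_add ha,
        show (2:ℝ) = ((2:ℕ):ℝ) by norm_num, Real.rpow_natCast]
      ring
    have e2 : a ^ ((1:ℝ) - κ - 1) = a * s := by
      rw [hs, show (1:ℝ) - κ - 1 = 1 + (-κ - 1) by ring, Real.rpow_add ha, Real.rpow_one]
    have e3 : a ^ (κ - 2) = t * a⁻¹ := by
      rw [ht, show κ - 2 = κ - 1 + -1 by ring, Real.rpow_add ha, Real.rpow_neg_one]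
    have hk := hkey a ha
    rw [← ht] at hk
    rw [e1, e2, e3]
    field_simp
    linear_combination (-(a * s)) * hk
  -- strict anti
  have hmono : StrictAntiOn g (Set.Ioc (0:ℝ) β) := by
    apply strictAntiOn_of_deriv_neg (convex_Ioc 0 β)
    · intro x hx
      exact ((hderiv x hx.1).continuousAt).continuousWithinAt
    · rw [interior_Ioc]
      intro x hx
      rw [(hderiv x hx.1).deriv]
      exact mul_neg_of_pos_of_neg (mul_pos hκ (Real.rpow_pos_of_pos hx.1 _))
        (sub_neg.mpr hx.2)
  -- negative at β
  have hFβpos : 0 < F β := by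
    apply intervalIntegral.intervalIntegral_pos_of_pos_on (hint β hβ0)
    · intro x hx
      exact Real.rpow_pos_of_pos (lt_trans hβ0 hx.1) _
    · exact hβ1
  have hgβ : g β < 0 := by
    rw [hg]
    simp only [hdef β, div_self hβ0.ne']
    rw [show (1:ℝ) - F β - 1 = -(F β) by ring]
    exact mul_neg_of_pos_of_neg (Real.rpow_pos_of_pos hβ0 _) (neg_lt_zero.mpr hFβpos)
  -- positivity near 0
  have htend : Tendsto (fun a : ℝ => a * F a + a) (𝓝[>] 0) (𝓝 0) := by
    rcases eq_or_ne κ 1 with hk1 | hk1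
    · have heq : ∀ᶠ a in 𝓝[>] (0:ℝ), -(Real.log a * a ^ (1:ℝ)) + a = a * F a + a := by
        filter_upwards [self_mem_nhdsWithin] with a (ha : 0 < a)
        have h0 : (0:ℝ) ∉ Set.uIcc a 1 := by
          intro h0
          rcases Set.mem_uIcc.mp h0 with ⟨h1, _⟩ | ⟨_, h2⟩ <;> linarith
        have hFa : F a = Real.log (1 / a) := by
          rw [hF, ← integral_inv h0]
          apply intervalIntegral.integral_congr
          intro x hx
          have hx0 : x ≠ 0 := fun hc => h0 (hc ▸ hx)
          simp [show κ - 2 = -1 by rw [hk1]; ring, Real.rpow_neg_one]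
        rw [hFa, one_div, Real.log_inv, Real.rpow_one]
        ring
      apply Tendsto.congr' heq
      have h1 := (tendsto_log_mul_rpow_nhdsGT_zero one_pos).neg
      rw [neg_zero] at h1
      have h2 : Tendsto (fun a : ℝ => a) (𝓝[>] (0:ℝ)) (𝓝 0) :=
        tendsto_id.mono_left nhdsWithin_le_nhds
      simpa using h1.add h2
    · have heq : ∀ᶠ a in 𝓝[>] (0:ℝ), (a - a ^ κ) / (κ - 1) + a = a * F a + a := by
        filter_upwards [self_mem_nhdsWithin] with a (ha : 0 < a)
        have hκ1 : κ - 1 ≠ 0 := sub_ne_zero.mpr hk1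
        have haκ : a * a ^ (κ - 1) = a ^ κ := by
          nth_rewrite 1 [show a = a ^ (1:ℝ) by rw [Real.rpow_one]]
          rw [← Real.rpow_add ha]; norm_num
        rw [hFa_eq hk1 a ha]
        field_simp
        linear_combination haκ
      apply Tendsto.congr' heq
      have hid : Tendsto (fun a : ℝ => a) (𝓝[>] (0:ℝ)) (𝓝 0) :=
        tendsto_id.mono_left nhdsWithin_le_nhds
      have hpκ : Tendsto (fun a : ℝ => a ^ κ) (𝓝[>] (0:ℝ)) (𝓝 0) := by
        have hc : ContinuousAt (fun x : ℝ => x ^ κ) 0 :=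
          Real.continuousAt_rpow_const 0 κ (Or.inr hκ.le)
        have := hc.tendsto.mono_left (nhdsWithin_le_nhds (s := Set.Ioi (0:ℝ)))
        rwa [Real.zero_rpow hκ.ne'] at this
      have := ((hid.sub hpκ).div_const (κ - 1)).add hid
      simpa using this
  have hsmall : ∃ ε > (0:ℝ), ∀ α ∈ Set.Ioo (0:ℝ) ε, 0 < g α := by
    have hev : ∀ᶠ a in 𝓝[>] (0:ℝ), a * F a + a < β :=
      htend.eventually_lt_const hβ0
    rw [eventually_nhdsWithin_iff] at hev
    rcases Metric.eventually_nhds_iff.mp hev with ⟨ε, hε, hball⟩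
    refine ⟨ε, hε, fun α hα => ?_⟩
    have hα0 : 0 < α := hα.1
    have hlt : α * F α + α < β := by
      apply hball (y := α) ?_ hα0
      rw [Real.dist_eq, sub_zero, abs_of_pos hα0]
      exact hα.2
    rw [hg]
    simp only [hdef α]
    apply mul_pos (Real.rpow_pos_of_pos hα0 _)
    have hlt2 : F α + 1 < β / α := by
      rw [lt_div_iff₀ hα0]
      nlinarith [hlt]
    linarith
  refine ⟨?_, hmono, hsmall, hgβ⟩
  -- unique root
  obtain ⟨ε, hε, hpos⟩ := hsmall
  set a0 := min (ε / 2) (β / 2) with ha0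
  have ha0pos : 0 < a0 := lt_min (by linarith) (by linarith)
  have ha0ε : a0 < ε := lt_of_le_of_lt (min_le_left _ _) (by linarith)
  have ha0β : a0 < β := lt_of_le_of_lt (min_le_right _ _) (by linarith)
  have hga0 : 0 < g a0 := hpos a0 ⟨ha0pos, ha0ε⟩
  have hcont : ContinuousOn g (Set.Icc a0 β) := by
    intro x hx
    exact ((hderiv x (lt_of_lt_of_le ha0pos hx.1)).continuousAt).continuousWithinAt
  have hivt := intermediate_value_Ioo' (le_of_lt ha0β) hcont
  obtain ⟨c, hc, hgc⟩ := hivt ⟨hgβ, hga0⟩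
  have hc0 : 0 < c := lt_trans ha0pos hc.1
  have hhc : h c = 0 := by
    rcases mul_eq_zero.mp hgc with hz | hz
    · exact absurd hz (ne_of_gt (Real.rpow_pos_of_pos hc0 _))
    · exact hz
  refine ⟨c, ⟨⟨hc0, hc.2⟩, hhc⟩, ?_⟩
  rintro x ⟨⟨hx0, hxβ⟩, hhx⟩
  have hgx : g x = 0 := by rw [hg]; simp [hhx]
  exact hmono.injOn ⟨hx0, le_of_lt hxβ⟩ ⟨hc0, le_of_lt hc.2⟩ (by rw [hgx, hgc])
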